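/- Let A be an n×n real matrix such that every eigenvalue μ ∈ ℂ of A (i.e., every element of the spectrum of A viewed as a complex matrix) satisfies Re(μ) < 0. Then there exist M > 0 and λ > 0 such that ‖exp(tA)‖ ≤ M·e^{−λt} for all t ≥ 0; i.e., a linear dynamics matrix all of whose eigenvalues have negative real parts generates an exponentially decaying semigroup, damping the state variables back to equilibrium. -/

import Mathlib

open Matrix NormedSpace
open scoped Matrix.Norms.L2Operator

lemma aux_exp_mulVec {n : ℕ} (X : Matrix (Fin n) (Fin n) ℂ) (lam : ℂ) (w : Fin n → ℂ)
    (hw : X *ᵥ w = lam • w) : exp X *ᵥ w = Complex.exp lam • w := by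
  have hpow : ∀ m : ℕ, (X ^ m) *ᵥ w = (lam ^ m) • w := by
    intro m
    induction m with
    | zero => simp
    | succ m ih =>
      rw [pow_succ', ← Matrix.mulVec_mulVec, ih, Matrix.mulVec_smul, hw, pow_succ',
        smul_smul, mul_comm]
  let L : Matrix (Fin n) (Fin n) ℂ →ₗ[ℂ] (Fin n → ℂ) :=
    { toFun := fun M => M *ᵥ w
      map_add' := fun M N => Matrix.add_mulVec M N w
      map_smul' := fun c M => Matrix.smul_mulVec c M w }
  have hs := exp_series_hasSum_exp' (𝕂 := ℂ) X
  have h1 : HasSum (fun m : ℕ => ((m.factorial : ℂ)⁻¹ • lam ^ m) • w)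
      (exp X *ᵥ w) := by
    have := hs.mapL L.toContinuousLinearMap
    convert this using 2 with m
    · rfl
    · simp [L, smul_smul, hpow, Matrix.mulVec_smul]
    · simp [L]
  have h2 : HasSum (fun m : ℕ => ((m.factorial : ℂ)⁻¹ • lam ^ m) • w)
      (Complex.exp lam • w) := by
    rw [Complex.exp_eq_exp_ℂ]
    exact (exp_series_hasSum_exp' (𝕂 := ℂ) lam).smul_const w
  exact h1.unique h2

lemma aux_spec {n : ℕ} (X : Matrix (Fin n) (Fin n) ℂ) (μ : ℂ)
    (hμ : μ ∈ spectrum ℂ (exp X)) :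
    ∃ lam ∈ spectrum ℂ X, μ = Complex.exp lam := by
  classical
  -- get an eigenvector of `exp X` for `μ`
  have hdet : (μ • (1 : Matrix (Fin n) (Fin n) ℂ) - exp X).det = 0 := by
    by_contra hne
    have : IsUnit (μ • (1 : Matrix (Fin n) (Fin n) ℂ) - exp X) :=
      (Matrix.isUnit_iff_isUnit_det _).mpr (isUnit_iff_ne_zero.mpr hne)
    rw [spectrum.mem_iff, Algebra.algebraMap_eq_smul_one] at hμ
    exact hμ this
  obtain ⟨v, hv0, hv⟩ := (Matrix.exists_mulVec_eq_zero_iff).mpr hdet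
  have hvE : exp X *ᵥ v = μ • v := by
    have := hv
    rw [Matrix.sub_mulVec, Matrix.smul_mulVec, Matrix.one_mulVec, sub_eq_zero] at this
    exact this.symm
  set T : Module.End ℂ (Fin n → ℂ) := Matrix.mulVecLin (exp X) with hT
  set S : Module.End ℂ (Fin n → ℂ) := Matrix.mulVecLin X with hS
  set E : Submodule ℂ (Fin n → ℂ) := Module.End.eigenspace T μ with hE
  have hvmem : v ∈ E := by
    rw [hE, Module.End.mem_eigenspace_iff]
    simpa [hT] using hvE
  have hcomm : X * exp X = exp X * X := (Commute.refl X).exp_right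
  have hinv : ∀ x ∈ E, S x ∈ E := by
    intro x hx
    rw [hE, Module.End.mem_eigenspace_iff] at hx ⊢
    have : T (S x) = S (T x) := by
      have h1 : T ∘ₗ S = S ∘ₗ T := by
        simp only [hT, hS, ← Matrix.mulVecLin_mul, hcomm]
      exact LinearMap.congr_fun h1 x
    rw [this, hx, LinearMap.map_smul]
  haveI : Nontrivial E := nontrivial_of_ne ⟨v, hvmem⟩ 0 (by
    intro h
    exact hv0 (by simpa using congrArg Subtype.val h))
  obtain ⟨lam, hlam⟩ := Module.End.exists_eigenvalue (S.restrict hinv)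
  obtain ⟨w', hw'⟩ := hlam.exists_hasEigenvector
  have hw0 : (w' : Fin n → ℂ) ≠ 0 := fun h => hw'.right (by simpa using Subtype.ext h)
  have hSw : X *ᵥ (w' : Fin n → ℂ) = lam • (w' : Fin n → ℂ) := by
    have := congrArg Subtype.val hw'.apply_eq_smul
    simpa [LinearMap.restrict_apply, hS] using this
  refine ⟨lam, ?_, ?_⟩
  · rw [spectrum.mem_iff, Algebra.algebraMap_eq_smul_one]
    intro hU
    have hdet2 : (lam • (1 : Matrix (Fin n) (Fin n) ℂ) - X).det = 0 := by
      rw [← Matrix.exists_mulVec_eq_zero_iff]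
      exact ⟨_, hw0, by
        rw [Matrix.sub_mulVec, Matrix.smul_mulVec, Matrix.one_mulVec, hSw, sub_self]⟩
    rw [Matrix.isUnit_iff_isUnit_det, hdet2] at hU
    exact (not_isUnit_zero : ¬ IsUnit (0:ℂ)) hU
  · have hwE : exp X *ᵥ (w' : Fin n → ℂ) = μ • (w' : Fin n → ℂ) := by
      have h3 : (w' : Fin n → ℂ) ∈ Module.End.eigenspace T μ := w'.2
      rw [Module.End.mem_eigenspace_iff] at h3
      simpa [hT] using h3
    have h2 := aux_exp_mulVec X lam _ hSw
    have : (μ - Complex.exp lam) • (w' : Fin n → ℂ) = 0 := by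
      rw [sub_smul, ← hwE, ← h2, sub_self]
    rcases smul_eq_zero.mp this with h | h
    · exact sub_eq_zero.mp h
    · exact absurd h hw0


lemma aux_norm_pow_le {𝔸 : Type*} [NormedRing 𝔸] [NormOneClass 𝔸] (x : 𝔸) (m : ℕ) :
    ‖x ^ m‖ ≤ ‖x‖ ^ m := by
  induction m with
  | zero => simp
  | succ m ih =>
    rw [pow_succ, pow_succ]
    exact (norm_mul_le _ _).trans (mul_le_mul_of_nonneg_right ih (norm_nonneg _))

lemma aux_norm_exp_le {𝔸 : Type*} [NormedRing 𝔸] [NormedAlgebra ℝ 𝔸] [CompleteSpace 𝔸]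
    [NormOneClass 𝔸] (x : 𝔸) : ‖exp x‖ ≤ Real.exp ‖x‖ := by
  rw [exp_eq_tsum (𝕂 := ℝ)]
  refine (norm_tsum_le_tsum_norm (norm_expSeries_summable' x)).trans ?_
  rw [Real.exp_eq_exp_ℝ, exp_eq_tsum_div]
  refine Summable.tsum_le_tsum ?_ (norm_expSeries_summable' x) ?_
  · intro m
    rw [norm_smul, norm_inv, Real.norm_natCast, div_eq_inv_mul]
    exact mul_le_mul_of_nonneg_left (aux_norm_pow_le x m) (by positivity)
  · exact Real.summable_pow_div_factorial ‖x‖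


lemma aux_norm_map_le {n : ℕ} (M : Matrix (Fin n) (Fin n) ℝ) :
    ‖M‖ ≤ ‖M.map (algebraMap ℝ ℂ)‖ := by
  rw [Matrix.l2_opNorm_def]
  refine ContinuousLinearMap.opNorm_le_bound _ (norm_nonneg _) ?_
  intro x
  set v : Fin n → ℝ := (WithLp.equiv 2 (Fin n → ℝ)) x with hv
  set cv : EuclideanSpace ℂ (Fin n) := (WithLp.equiv 2 (Fin n → ℂ)).symm (fun i => (v i : ℂ))
    with hcv
  have hnormv : ‖cv‖ = ‖x‖ := by
    rw [EuclideanSpace.norm_eq, EuclideanSpace.norm_eq]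
    congr 1
    refine Finset.sum_congr rfl fun i _ => ?_
    simp [hcv, hv, Complex.norm_real]
  have happ : (Matrix.toEuclideanLin.trans LinearMap.toContinuousLinearMap M) x
      = (EuclideanSpace.equiv (Fin n) ℝ).symm (M *ᵥ v) := rfl
  rw [happ]
  have hkey : ‖(EuclideanSpace.equiv (Fin n) ℝ).symm (M *ᵥ v)‖
      = ‖(EuclideanSpace.equiv (Fin n) ℂ).symm ((M.map (algebraMap ℝ ℂ)) *ᵥ (fun i => (v i : ℂ)))‖ := by
    rw [EuclideanSpace.norm_eq, EuclideanSpace.norm_eq]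
    congr 1
    refine Finset.sum_congr rfl fun i _ => ?_
    have h5 : ((M.map (Complex.ofReal)) *ᵥ (fun j => (v j : ℂ))) i = ((M *ᵥ v) i : ℂ) := by
      simp [Matrix.mulVec, dotProduct, Matrix.map_apply]
    simp [Complex.coe_algebraMap, h5, Complex.norm_real]
  rw [hkey]
  have := (M.map (algebraMap ℝ ℂ)).l2_opNorm_mulVec cv
  have hcveq : (WithLp.equiv 2 (Fin n → ℂ)) cv = fun i => (v i : ℂ) := by
    simp [hcv]
  calc ‖(EuclideanSpace.equiv (Fin n) ℂ).symm ((M.map (algebraMap ℝ ℂ)) *ᵥ (fun i => (v i : ℂ)))‖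
      = ‖(EuclideanSpace.equiv (Fin n) ℂ).symm ((M.map (algebraMap ℝ ℂ)) *ᵥ ((WithLp.equiv 2 (Fin n → ℂ)) cv))‖ := by rw [hcveq]
    _ ≤ ‖M.map (algebraMap ℝ ℂ)‖ * ‖cv‖ := (M.map (algebraMap ℝ ℂ)).l2_opNorm_mulVec cv
    _ = ‖M.map (algebraMap ℝ ℂ)‖ * ‖x‖ := by rw [hnormv]

/-- A linear dynamics matrix all of whose complex eigenvalues have negative real parts generates
an exponentially decaying semigroup: there exist `M > 0` and `λ > 0` with
`‖exp(tA)‖ ≤ M·e^{−λt}` for all `t ≥ 0`. -/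
theorem exp_decay_of_spectrum_re_neg
    (n : ℕ) (A : Matrix (Fin n) (Fin n) ℝ)
    (hspec : ∀ μ ∈ spectrum ℂ (A.map (algebraMap ℝ ℂ)), μ.re < 0) :
    ∃ M > (0:ℝ), ∃ l > (0:ℝ), ∀ t ≥ (0:ℝ), ‖exp (t • A)‖ ≤ M * Real.exp (-l * t) := by
  classical
  rcases Nat.eq_zero_or_pos n with hn | hn
  · subst hn
    refine ⟨1, one_pos, 1, one_pos, fun t ht => ?_⟩
    have h0 : exp (t • A) = 0 := Subsingleton.elim _ _
    rw [h0, norm_zero]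
    positivity
  haveI : Nonempty (Fin n) := ⟨⟨0, hn⟩⟩
  set Aℂ : Matrix (Fin n) (Fin n) ℂ := A.map (algebraMap ℝ ℂ) with hAc
  have hee : (exp : Matrix (Fin n) (Fin n) ℂ → Matrix (Fin n) (Fin n) ℂ) = exp :=
    rfl
  -- the spectral bound
  obtain ⟨μ₀, hμ₀mem, hμ₀max'⟩ := (spectrum.isCompact (𝕜 := ℂ) (a := Aℂ)).exists_isMaxOn
    (spectrum.nonempty Aℂ) Complex.continuous_re.continuousOn
  have hμ₀max : ∀ y ∈ spectrum ℂ Aℂ, y.re ≤ μ₀.re := fun y hy => hμ₀max' hy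
  set a : ℝ := -μ₀.re with ha
  have ha0 : 0 < a := by
    have := hspec μ₀ hμ₀mem
    simp only [ha]
    linarith
  set r : ℝ := Real.exp (-(a/2)) with hrdef
  have hr0 : 0 < r := Real.exp_pos _
  have hr1 : r < 1 := by
    have : Real.exp (-(a/2)) < Real.exp 0 := Real.exp_lt_exp.mpr (by linarith)
    rwa [Real.exp_zero] at this
  set B : Matrix (Fin n) (Fin n) ℂ := exp Aℂ with hB
  set rn : NNReal := ⟨r, hr0.le⟩ with hrn
  have hspecB : ∀ μ ∈ spectrum ℂ B, ‖μ‖₊ < rn := by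
    intro μ hμ
    obtain ⟨lam, hlam, rfl⟩ := aux_spec Aℂ μ hμ
    have h2 : lam.re ≤ -a := by
      have := hμ₀max lam hlam
      simp only [ha]; linarith
    rw [← NNReal.coe_lt_coe]
    show ‖Complex.exp lam‖ < r
    rw [Complex.norm_exp, hrdef]
    exact Real.exp_lt_exp.mpr (by linarith)
  have hrad : spectralRadius ℂ B < (rn : ENNReal) :=
    spectrum.spectralRadius_lt_of_forall_lt_of_nonempty (spectrum.nonempty B) hspecB
  have htend := spectrum.pow_nnnorm_pow_one_div_tendsto_nhds_spectralRadius B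
  have hev : ∀ᶠ k : ℕ in Filter.atTop,
      (‖B ^ k‖₊ : ENNReal) ^ (1 / (k:ℝ)) < (rn : ENNReal) :=
    htend.eventually_lt_const hrad
  obtain ⟨k, hkb, hk1⟩ := (hev.and (Filter.eventually_ge_atTop 1)).exists
  have hkpos : (0:ℝ) < k := by exact_mod_cast hk1
  have hBk : ‖B ^ k‖ ≤ r ^ k := by
    have hk0 : (k:ℝ) ≠ 0 := ne_of_gt hkpos
    have h3 : ((‖B ^ k‖₊ : ENNReal) ^ (1 / (k:ℝ))) ^ (k:ℝ) ≤ (rn : ENNReal) ^ (k:ℝ) :=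
      ENNReal.rpow_le_rpow hkb.le (by positivity)
    rw [← ENNReal.rpow_mul, one_div_mul_cancel hk0, ENNReal.rpow_one] at h3
    rw [ENNReal.rpow_natCast, ← ENNReal.coe_pow, ENNReal.coe_le_coe] at h3
    have := NNReal.coe_le_coe.mpr h3
    exact this.trans_eq (NNReal.coe_pow rn k)
  refine ⟨Real.exp (a/2*k + k*‖Aℂ‖), Real.exp_pos _, a/2, by positivity, fun t ht => ?_⟩
  -- transfer to the complex side
  have hmapexp : (exp (t • A)).map (algebraMap ℝ ℂ) = exp (t • Aℂ) := by
    have hcont : Continuous (⇑((algebraMap ℝ ℂ).mapMatrix :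
        Matrix (Fin n) (Fin n) ℝ →+* Matrix (Fin n) (Fin n) ℂ)) := by
      have hlin : Continuous (⇑((Algebra.linearMap ℝ ℂ).mapMatrix :
          Matrix (Fin n) (Fin n) ℝ →ₗ[ℝ] Matrix (Fin n) (Fin n) ℂ)) :=
        LinearMap.continuous_of_finiteDimensional _
      exact hlin
    have h4 := map_exp_of_mem_ball (𝕂 := ℝ) ((algebraMap ℝ ℂ).mapMatrix :
        Matrix (Fin n) (Fin n) ℝ →+* Matrix (Fin n) (Fin n) ℂ) hcont (t • A)
        ((expSeries_radius_eq_top ℝ (Matrix (Fin n) (Fin n) ℝ)).symm ▸ edist_lt_top _ _)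
    have h5 : ((algebraMap ℝ ℂ).mapMatrix : Matrix (Fin n) (Fin n) ℝ →+* _) (t • A)
        = t • Aℂ := by
      ext i j
      simp [RingHom.mapMatrix_apply, Matrix.map_apply, Matrix.smul_apply, Complex.real_smul, hAc]
    calc (exp (t • A)).map (algebraMap ℝ ℂ)
        = (algebraMap ℝ ℂ).mapMatrix (exp (t • A)) := rfl
      _ = exp ((algebraMap ℝ ℂ).mapMatrix (t • A)) := h4
      _ = exp (t • Aℂ) := by rw [h5, hee]
  have htrans : ‖exp (t • A)‖ ≤ ‖exp (t • Aℂ)‖ := hmapexp ▸ aux_norm_map_le (exp (t • A))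
  -- decompose t = k*q + s
  set q : ℕ := ⌊t / k⌋₊ with hq
  set s : ℝ := t - k * q with hs
  have hs0 : 0 ≤ s := by
    have h6 : (q : ℝ) ≤ t / k := Nat.floor_le (by positivity)
    have h6' : (q : ℝ) * k ≤ t := (le_div_iff₀ hkpos).mp h6
    simp only [hs]; nlinarith
  have hsk : s ≤ k := by
    have h7 : t / k < q + 1 := Nat.lt_floor_add_one _
    have := (div_lt_iff₀ hkpos).mp h7
    simp only [hs]
    nlinarith
  have hqk : t - k ≤ k * q := by simp only [hs] at hsk ⊢; linarith
  -- split the exponential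
  have hsplit : exp (t • Aℂ) = (B ^ k) ^ q * exp (s • Aℂ) := by
    have hcomm : Commute (((k * q : ℕ) : ℝ) • Aℂ) (s • Aℂ) :=
      ((Commute.refl Aℂ).smul_left _).smul_right _
    have h8 : t • Aℂ = ((k * q : ℕ) : ℝ) • Aℂ + s • Aℂ := by
      rw [← add_smul]
      congr 1
      push_cast
      simp only [hs]; ring
    rw [h8, Matrix.exp_add_of_commute _ _ hcomm, Nat.cast_smul_eq_nsmul, Matrix.exp_nsmul, ← hB, pow_mul]
  have h9 : ‖exp (s • Aℂ)‖ ≤ Real.exp (k * ‖Aℂ‖) := by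
    rw [← hee]
    refine (aux_norm_exp_le _).trans ?_
    apply Real.exp_le_exp.mpr
    rw [norm_smul, Real.norm_eq_abs, abs_of_nonneg hs0]
    have hA0 : (0:ℝ) ≤ ‖Aℂ‖ := norm_nonneg _
    nlinarith
  have h10 : ‖(B ^ k) ^ q‖ ≤ r ^ (k * q) := by
    refine (aux_norm_pow_le _ q).trans ?_
    rw [pow_mul]
    exact pow_le_pow_left₀ (norm_nonneg _) hBk q
  have h11 : r ^ (k * q) ≤ Real.exp (a/2*k) * Real.exp (-(a/2) * t) := by
    have h12 : r ^ (k*q) = Real.exp (-(a/2) * (k*q)) := by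
      rw [hrdef, ← Real.exp_nat_mul]
      congr 1; push_cast; ring
    rw [h12, ← Real.exp_add]
    apply Real.exp_le_exp.mpr
    nlinarith [ha0.le, hqk]
  calc ‖exp (t • A)‖ ≤ ‖exp (t • Aℂ)‖ := htrans
    _ = ‖(B ^ k) ^ q * exp (s • Aℂ)‖ := by rw [hsplit]
    _ ≤ ‖(B ^ k) ^ q‖ * ‖exp (s • Aℂ)‖ := norm_mul_le _ _
    _ ≤ r ^ (k*q) * Real.exp (k * ‖Aℂ‖) := by
        exact mul_le_mul h10 h9 (norm_nonneg _) (by positivity)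
    _ ≤ (Real.exp (a/2*k) * Real.exp (-(a/2)*t)) * Real.exp (k*‖Aℂ‖) :=
        mul_le_mul_of_nonneg_right h11 (Real.exp_pos _).le
    _ = Real.exp (a/2*k + k*‖Aℂ‖) * Real.exp (-(a/2) * t) := by
        rw [← Real.exp_add, ← Real.exp_add, ← Real.exp_add]; ring_nf
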